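/- The quotient map ρ : X → Â² does not separate all closed F-orbits: the points z = (x₁, 0, x₃, 0) and z' = (c x₁, 0, c x₃, 0) for c ≠ 0, 1 and (x₁,x₃) ≠ (0,0) are distinct fixed points of the F-action (hence distinct closed orbits) but ρ(z) = ρ(z'). -/

import Mathlib

def actF (a : ℂ) (x : Fin 4 → ℂ) : Fin 4 → ℂ :=
  ![x 0 + a * x 1, x 1, x 2 - a * x 3, x 3]

def inX (x : Fin 4 → ℂ) : Prop := x 0 * x 3 + x 1 * x 2 = 0 ∧ x ≠ 0

abbrev P1 := Projectivization ℂ (Fin 2 → ℂ)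

theorem stmt16 (x₁ x₃ c : ℂ) (h : (x₁, x₃) ≠ (0, 0)) (hc0 : c ≠ 0) (hc1 : c ≠ 1)
    (h1 : ![x₁, -x₃] ≠ 0) (h2 : ![c * x₁, -(c * x₃)] ≠ 0) :
    inX ![x₁, 0, x₃, 0] ∧ inX ![c * x₁, 0, c * x₃, 0] ∧
    (![x₁, 0, x₃, 0] : Fin 4 → ℂ) ≠ ![c * x₁, 0, c * x₃, 0] ∧
    (∀ a : ℂ, actF a ![x₁, 0, x₃, 0] = ![x₁, 0, x₃, 0]) ∧
    (∀ a : ℂ, actF a ![c * x₁, 0, c * x₃, 0] = ![c * x₁, 0, c * x₃, 0]) ∧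
    ((((0 : ℂ), (0 : ℂ)), Projectivization.mk ℂ ![x₁, -x₃] h1) =
      (((0 : ℂ), (0 : ℂ)), Projectivization.mk ℂ ![c * x₁, -(c * x₃)] h2)) := by
  have hx : x₁ ≠ 0 ∨ x₃ ≠ 0 := by
    by_contra hh
    push_neg at hh
    exact h (by simp [hh.1, hh.2])
  refine ⟨⟨by simp, ?_⟩, ⟨by ring_nf; simp, ?_⟩, ?_, ?_, ?_, ?_⟩
  · intro he
    rcases hx with hx | hx
    · exact hx (by simpa using congrFun he 0)
    · exact hx (by simpa using congrFun he 2)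
  · intro he
    rcases hx with hx | hx
    · exact mul_ne_zero hc0 hx (by simpa using congrFun he 0)
    · exact mul_ne_zero hc0 hx (by simpa using congrFun he 2)
  · intro he
    have e0 : x₁ = c * x₁ := by simpa using congrFun he 0
    have e2 : x₃ = c * x₃ := by simpa using congrFun he 2
    rcases hx with hx | hx
    · field_simp at e0; exact hc1 e0.symm
    · field_simp at e2; exact hc1 e2.symm
  · intro a
    funext i
    fin_cases i <;> simp [actF]
  · intro a
    funext i
    fin_cases i <;> simp [actF]
  · refine Prod.ext rfl ?_
    rw [Projectivization.mk_eq_mk_iff]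
    refine ⟨Units.mk0 c⁻¹ (inv_ne_zero hc0), ?_⟩
    funext i
    fin_cases i <;> simp [Units.smul_def] <;> field_simp
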